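/- Let f : ℝ^n → ℝ be differentiable and L-smooth with L > 0 (‖∇f(x) − ∇f(y)‖ ≤ L·‖x − y‖ for all x, y), bounded below by f* ∈ ℝ (f(θ) ≥ f* for all θ), and satisfying the Polyak–Łojasiewicz inequality with constant Λ > 0: (1/2)·‖∇f(θ)‖² ≥ Λ·(f(θ) − f*) for all θ ∈ ℝ^n. Let 0 < c ≤ C and for each t ∈ ℕ let z_t ∈ ℝ^n satisfy c ≤ z_{t,k} ≤ C for every coordinate k. Consider the iterates θ_{t+1} = θ_t − η·(z_t ⊙ ∇f(θ_t)) with step size 0 < η ≤ 2c/(L·C²), and set ρ = 1 − Λ·η·(2c − η·L·C²). If additionally ρ ≥ 0, then for every T ∈ ℕ, f(θ_T) − f* ≤ ρ^T·(f(θ_0) − f*); i.e., the objective values converge to f* at a geometric (exponential) rate ρ. -/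

import Mathlib

open MeasureTheory

section Aux

open InnerProductSpace RealInnerProductSpace

variable {F : Type*} [NormedAddCommGroup F] [InnerProductSpace ℝ F] [CompleteSpace F]

lemma fderiv_eq_inner_gradient (f : F → ℝ) (x v : F) :
    fderiv ℝ f x v = ⟪gradient f x, v⟫_ℝ := by
  rw [gradient]
  rw [← InnerProductSpace.toDual_apply_apply, (InnerProductSpace.toDual ℝ F).apply_symm_apply]

/-- Descent lemma: an `L`-smooth function is bounded above by its first-order
expansion plus `L/2 ‖y - x‖²`. -/
lemma descent_lemma (f : F → ℝ) (hf : Differentiable ℝ f) (L : ℝ) (hL : 0 ≤ L)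
    (hs : ∀ x y : F, ‖gradient f x - gradient f y‖ ≤ L * ‖x - y‖) (x y : F) :
    f y ≤ f x + ⟪gradient f x, y - x⟫_ℝ + L / 2 * ‖y - x‖ ^ 2 := by
  set v := y - x with hv
  set φ : ℝ → ℝ := fun s => f (x + s • v) - s * ⟪gradient f x, v⟫_ℝ
      - (L / 2 * ‖v‖ ^ 2) * s ^ 2 with hφ
  have hline : ∀ s : ℝ, HasDerivAt (fun u : ℝ => x + u • v) v s := by
    intro s
    exact (((hasDerivAt_id s).smul_const v).const_add x).congr_deriv (by simp)
  have hcomp : ∀ s : ℝ, HasDerivAt (fun u : ℝ => f (x + u • v))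
      ⟪gradient f (x + s • v), v⟫_ℝ s := by
    intro s
    have := (hf (x + s • v)).hasFDerivAt.comp_hasDerivAt s (hline s)
    simpa [Function.comp_def] using this
  have hφ' : ∀ s : ℝ, HasDerivAt φ
      (⟪gradient f (x + s • v), v⟫_ℝ - ⟪gradient f x, v⟫_ℝ
        - (L / 2 * ‖v‖ ^ 2) * (2 * s)) s := by
    intro s
    have h1 := hcomp s
    have h2 : HasDerivAt (fun u : ℝ => u * ⟪gradient f x, v⟫_ℝ)
        ⟪gradient f x, v⟫_ℝ s := by simpa using (hasDerivAt_id s).mul_const _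
    have h3 : HasDerivAt (fun u : ℝ => (L / 2 * ‖v‖ ^ 2) * u ^ 2)
        ((L / 2 * ‖v‖ ^ 2) * (2 * s)) s := by
      have := (hasDerivAt_pow 2 s).const_mul (L / 2 * ‖v‖ ^ 2)
      simpa [mul_comm, mul_assoc, mul_left_comm] using this
    exact (h1.sub h2).sub h3
  have hanti : AntitoneOn φ (Set.Icc 0 1) := by
    refine antitoneOn_of_deriv_nonpos (convex_Icc 0 1)
      (fun s _ => ((hφ' s).differentiableAt.continuousAt).continuousWithinAt)
      (fun s _ => ((hφ' s).differentiableAt).differentiableWithinAt) ?_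
    intro s hsmem
    rw [interior_Icc] at hsmem
    obtain ⟨hs0, _⟩ := hsmem
    rw [(hφ' s).deriv]
    have h1 : ⟪gradient f (x + s • v), v⟫_ℝ - ⟪gradient f x, v⟫_ℝ
        = ⟪gradient f (x + s • v) - gradient f x, v⟫_ℝ := by
      rw [inner_sub_left]
    rw [sub_sub, ← sub_sub, h1]
    have h2 : ⟪gradient f (x + s • v) - gradient f x, v⟫_ℝ
        ≤ ‖gradient f (x + s • v) - gradient f x‖ * ‖v‖ :=
      real_inner_le_norm _ _
    have h3 : ‖gradient f (x + s • v) - gradient f x‖ ≤ L * (|s| * ‖v‖) := by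
      have := hs (x + s • v) x
      simpa [norm_smul, Real.norm_eq_abs] using this
    rw [abs_of_pos hs0] at h3
    have h4 : ‖gradient f (x + s • v) - gradient f x‖ * ‖v‖
        ≤ L * (s * ‖v‖) * ‖v‖ :=
      mul_le_mul_of_nonneg_right h3 (norm_nonneg _)
    nlinarith [sq_nonneg ‖v‖]
  have h01 := hanti (Set.mem_Icc.mpr ⟨le_refl 0, zero_le_one⟩)
    (Set.mem_Icc.mpr ⟨zero_le_one, le_refl 1⟩) zero_le_one
  have h0 : φ 0 = f x := by simp [hφ]
  have h1 : φ 1 = f y - ⟪gradient f x, v⟫_ℝ - L / 2 * ‖v‖ ^ 2 := by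
    simp [hφ, hv]
  rw [h0, h1] at h01
  linarith

end Aux

open RealInnerProductSpace in
/-- Exponential convergence of diagonally preconditioned gradient descent under
`L`-smoothness and the Polyak–Łojasiewicz inequality: with preconditioner entries in
`[c, C]`, step size `0 < η ≤ 2c/(LC²)` and rate `ρ = 1 - Λη(2c - ηLC²) ≥ 0`, the
objective values converge geometrically: `f(θ_T) - f* ≤ ρ^T * (f(θ_0) - f*)`. -/
theorem preconditioned_gd_exponential_convergence (n : ℕ)
    (f : EuclideanSpace ℝ (Fin n) → ℝ) (hf : Differentiable ℝ f)
    (L : ℝ) (hL : 0 < L)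
    (hsmooth : ∀ x y : EuclideanSpace ℝ (Fin n),
      ‖gradient f x - gradient f y‖ ≤ L * ‖x - y‖)
    (fstar : ℝ) (hbdd : ∀ θ, fstar ≤ f θ)
    (Λ : ℝ) (hΛ : 0 < Λ)
    (hPL : ∀ θ, Λ * (f θ - fstar) ≤ (1 / 2) * ‖gradient f θ‖ ^ 2)
    (c C : ℝ) (hc : 0 < c) (hcC : c ≤ C)
    (z : ℕ → Fin n → ℝ) (hz : ∀ t i, c ≤ z t i ∧ z t i ≤ C)
    (η : ℝ) (hη : 0 < η) (hη2 : η ≤ 2 * c / (L * C ^ 2))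
    (θ : ℕ → EuclideanSpace ℝ (Fin n))
    (hstep : ∀ t, θ (t + 1)
      = θ t - η • (WithLp.equiv 2 (Fin n → ℝ)).symm
          (fun i => z t i * gradient f (θ t) i))
    (ρ : ℝ) (hρ : ρ = 1 - Λ * η * (2 * c - η * L * C ^ 2)) (hρ0 : 0 ≤ ρ) :
    ∀ T : ℕ, f (θ T) - fstar ≤ ρ ^ T * (f (θ 0) - fstar) := by
  have hC : 0 < C := lt_of_lt_of_le hc hcC
  have hkey : 2 * c - η * L * C ^ 2 ≥ 0 := by
    have hLC : 0 < L * C ^ 2 := by positivity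
    rw [le_div_iff₀ hLC] at hη2
    nlinarith
  -- one-step contraction
  have hone : ∀ t, f (θ (t + 1)) - fstar ≤ ρ * (f (θ t) - fstar) := by
    intro t
    set g : EuclideanSpace ℝ (Fin n) := gradient f (θ t) with hg
    set S : ℝ := ∑ i, g i ^ 2 with hS
    have hSnorm : S = ‖g‖ ^ 2 := by
      rw [← real_inner_self_eq_norm_sq]
      rw [PiLp.inner_apply]
      simp [hS, sq, RCLike.inner_apply]
    have hd : ∀ i, (θ (t + 1) - θ t) i = -(η * (z t i * g i)) := by
      intro i
      rw [hstep t]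
      simp [hg, PiLp.toLp_apply]
    have hinner : (inner ℝ g (θ (t + 1) - θ t) : ℝ) ≤ -(η * c * S) := by
      rw [PiLp.inner_apply]
      simp only [RCLike.inner_apply, starRingEnd_apply, star_trivial]
      have hterm : ∀ i : Fin n, g i * (θ (t + 1) - θ t) i ≤ -(η * c * g i ^ 2) := by
        intro i
        rw [hd i]
        have h1 := (hz t i).1
        nlinarith [mul_nonneg (mul_nonneg hη.le (sub_nonneg.2 h1)) (sq_nonneg (g i))]
      calc (∑ i, (θ (t + 1) - θ t) i * g i) ≤ ∑ i, -(η * c * g i ^ 2) :=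
            Finset.sum_le_sum fun i _ => (mul_comm _ _).trans_le (hterm i)
        _ = -(η * c * S) := by
            rw [hS]
            rw [Finset.sum_neg_distrib, Finset.mul_sum]
    have hnormd : ‖θ (t + 1) - θ t‖ ^ 2 ≤ η ^ 2 * C ^ 2 * S := by
      rw [← real_inner_self_eq_norm_sq, PiLp.inner_apply]
      simp only [RCLike.inner_apply, starRingEnd_apply, star_trivial]
      have hterm : ∀ i : Fin n, (θ (t + 1) - θ t) i * (θ (t + 1) - θ t) i
          ≤ η ^ 2 * C ^ 2 * g i ^ 2 := by
        intro i
        rw [hd i]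
        have h1 := (hz t i).1
        have h2 := (hz t i).2
        have hz0 : 0 < z t i := lt_of_lt_of_le hc h1
        nlinarith [mul_nonneg (mul_nonneg (sq_nonneg η)
          (mul_nonneg (sub_nonneg.2 h2) (by linarith : (0:ℝ) ≤ C + z t i)))
          (sq_nonneg (g i))]
      calc (∑ i, (θ (t + 1) - θ t) i * (θ (t + 1) - θ t) i)
          ≤ ∑ i, η ^ 2 * C ^ 2 * g i ^ 2 := Finset.sum_le_sum fun i _ => hterm i
        _ = η ^ 2 * C ^ 2 * S := by rw [hS, Finset.mul_sum]
    have hdesc := descent_lemma f hf L hL.le hsmooth (θ t) (θ (t + 1))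
    rw [← hg] at hdesc
    have hle : f (θ (t + 1)) ≤ f (θ t) - η * c * S + L / 2 * (η ^ 2 * C ^ 2 * S) := by
      have h2 : L / 2 * ‖θ (t + 1) - θ t‖ ^ 2 ≤ L / 2 * (η ^ 2 * C ^ 2 * S) :=
        mul_le_mul_of_nonneg_left hnormd (by positivity)
      linarith
    have hPLt := hPL (θ t)
    rw [← hg, ← hSnorm] at hPLt
    have hfac : 0 ≤ η / 2 * (2 * c - η * L * C ^ 2) := by positivity
    have hSge : 2 * Λ * (f (θ t) - fstar) ≤ S := by linarith
    have hmain : f (θ t) - η * c * S + L / 2 * (η ^ 2 * C ^ 2 * S) - fstar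
        ≤ ρ * (f (θ t) - fstar) := by
      have h3 : η / 2 * (2 * c - η * L * C ^ 2) * (2 * Λ * (f (θ t) - fstar))
          ≤ η / 2 * (2 * c - η * L * C ^ 2) * S :=
        mul_le_mul_of_nonneg_left hSge hfac
      rw [hρ]
      nlinarith
    linarith
  intro T
  induction T with
  | zero => simp
  | succ T ih =>
    calc f (θ (T + 1)) - fstar ≤ ρ * (f (θ T) - fstar) := hone T
      _ ≤ ρ * (ρ ^ T * (f (θ 0) - fstar)) := mul_le_mul_of_nonneg_left ih hρ0
      _ = ρ ^ (T + 1) * (f (θ 0) - fstar) := by ring
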